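/- (Remark 3, converse step 2.) Let q be a prime power, L ≥ 1, and let ψ_1, ψ_2, ψ_3 be encoders with X_1 = ψ_1(W_1, W_2) ∈ 𝔽_q^{T_1}, X_2 = ψ_2(W_2, W_3) ∈ 𝔽_q^{T_2}, X_3 = ψ_3(W_1, W_3) ∈ 𝔽_q^{T_3}. If for every 2-element subset A ⊆ {1, 2, 3} there is a decoder φ_A satisfying φ_A((X_n)_{n ∈ A}) = (W_1 + W_2 + W_3, 2·W_1 + W_2 + W_3) for all (W_1, W_2, W_3) ∈ (𝔽_q^L)³, then T_i + T_j ≥ 3·L for every 2-element subset {i, j} ⊆ {1, 2, 3}; hence any correct scheme for this demand has communication cost at least 3. -/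

import Mathlib

private lemma aux_card_3L {𝔽 : Type} [Field 𝔽] [Fintype 𝔽] (L a b : ℕ)
    (f : ((Fin L → 𝔽) × (Fin L → 𝔽) × (Fin L → 𝔽)) → ((Fin a → 𝔽) × (Fin b → 𝔽)))
    (hf : Function.Injective f) : 3 * L ≤ a + b := by
  have hcard := Fintype.card_le_of_injective f hf
  have hq : 1 < Fintype.card 𝔽 := Fintype.one_lt_card
  set q := Fintype.card 𝔽
  have h1 : Fintype.card ((Fin L → 𝔽) × (Fin L → 𝔽) × (Fin L → 𝔽)) = q ^ (3 * L) := by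
    simp [Fintype.card_fun]; ring
  have h2 : Fintype.card ((Fin a → 𝔽) × (Fin b → 𝔽)) = q ^ (a + b) := by
    simp [Fintype.card_fun, pow_add]; rfl
  rw [h1, h2] at hcard
  exact (Nat.pow_le_pow_iff_right hq).mp hcard

private lemma aux_w1 {𝔽 : Type} [Field 𝔽] {L : ℕ} {W1 W2 W3 W1' W2' W3' : Fin L → 𝔽}
    (e1 : W1 + W2 + W3 = W1' + W2' + W3')
    (e2 : (2 : 𝔽) • W1 + W2 + W3 = (2 : 𝔽) • W1' + W2' + W3') : W1 = W1' := by
  have : ((2 : 𝔽) • W1 + W2 + W3) - (W1 + W2 + W3)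
      = ((2 : 𝔽) • W1' + W2' + W3') - (W1' + W2' + W3') := by rw [e1, e2]
  have h2 : ∀ x : Fin L → 𝔽, (2 : 𝔽) • x = x + x := fun x => by
    rw [show (2 : 𝔽) = 1 + 1 by norm_num, add_smul, one_smul]
  rw [h2, h2] at this
  calc W1 = (W1 + W1 + W2 + W3) - (W1 + W2 + W3) := by abel
    _ = (W1' + W1' + W2' + W3') - (W1' + W2' + W3') := this
    _ = W1' := by abel

theorem stmt_14 {𝔽 : Type} [Field 𝔽] [Fintype 𝔽] (L T1 T2 T3 : ℕ) (hL : 0 < L)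
    (ψ1 : (Fin L → 𝔽) → (Fin L → 𝔽) → (Fin T1 → 𝔽))
    (ψ2 : (Fin L → 𝔽) → (Fin L → 𝔽) → (Fin T2 → 𝔽))
    (ψ3 : (Fin L → 𝔽) → (Fin L → 𝔽) → (Fin T3 → 𝔽))
    (hdec12 : ∃ φ : (Fin T1 → 𝔽) → (Fin T2 → 𝔽) → ((Fin L → 𝔽) × (Fin L → 𝔽)),
      ∀ W1 W2 W3 : Fin L → 𝔽,
        φ (ψ1 W1 W2) (ψ2 W2 W3) = (W1 + W2 + W3, (2 : 𝔽) • W1 + W2 + W3))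
    (hdec13 : ∃ φ : (Fin T1 → 𝔽) → (Fin T3 → 𝔽) → ((Fin L → 𝔽) × (Fin L → 𝔽)),
      ∀ W1 W2 W3 : Fin L → 𝔽,
        φ (ψ1 W1 W2) (ψ3 W1 W3) = (W1 + W2 + W3, (2 : 𝔽) • W1 + W2 + W3))
    (hdec23 : ∃ φ : (Fin T2 → 𝔽) → (Fin T3 → 𝔽) → ((Fin L → 𝔽) × (Fin L → 𝔽)),
      ∀ W1 W2 W3 : Fin L → 𝔽,
        φ (ψ2 W2 W3) (ψ3 W1 W3) = (W1 + W2 + W3, (2 : 𝔽) • W1 + W2 + W3)) :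
    3 * L ≤ T1 + T2 ∧ 3 * L ≤ T1 + T3 ∧ 3 * L ≤ T2 + T3 := by
  obtain ⟨φ12, h12⟩ := hdec12
  obtain ⟨φ13, h13⟩ := hdec13
  obtain ⟨φ23, h23⟩ := hdec23
  refine ⟨?_, ?_, ?_⟩
  · -- pair {1,2}
    apply aux_card_3L L T1 T2 (fun W => (ψ1 W.1 W.2.1, ψ2 W.2.1 W.2.2))
    rintro ⟨W1, W2, W3⟩ ⟨W1', W2', W3'⟩ h
    simp only [Prod.mk.injEq] at h
    obtain ⟨ha, hb⟩ := h
    have key : φ12 (ψ1 W1 W2) (ψ2 W2 W3) = φ12 (ψ1 W1' W2') (ψ2 W2' W3') := by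
      rw [ha, hb]
    rw [h12, h12, Prod.mk.injEq] at key
    have hW1 : W1 = W1' := aux_w1 key.1 key.2
    have key2 : φ13 (ψ1 W1 W2) (ψ3 W1 0) = φ13 (ψ1 W1' W2') (ψ3 W1' 0) := by
      rw [ha, hW1]
    rw [h13, h13, Prod.mk.injEq] at key2
    have hW2 : W2 = W2' := by
      have := key2.1
      rw [hW1] at this
      exact add_left_cancel (add_right_cancel this)
    have hW3 : W3 = W3' := by
      have := key.1
      rw [hW1, hW2] at this
      exact add_left_cancel this
    simp [hW1, hW2, hW3]
  · -- pair {1,3}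
    apply aux_card_3L L T1 T3 (fun W => (ψ1 W.1 W.2.1, ψ3 W.1 W.2.2))
    rintro ⟨W1, W2, W3⟩ ⟨W1', W2', W3'⟩ h
    simp only [Prod.mk.injEq] at h
    obtain ⟨ha, hb⟩ := h
    have key : φ13 (ψ1 W1 W2) (ψ3 W1 W3) = φ13 (ψ1 W1' W2') (ψ3 W1' W3') := by
      rw [ha, hb]
    rw [h13, h13, Prod.mk.injEq] at key
    have hW1 : W1 = W1' := aux_w1 key.1 key.2
    have key2 : φ13 (ψ1 W1 0) (ψ3 W1 W3) = φ13 (ψ1 W1' 0) (ψ3 W1' W3') := by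
      rw [hb, hW1]
    rw [h13, h13, Prod.mk.injEq] at key2
    have hW3 : W3 = W3' := by
      have := key2.1
      rw [hW1] at this
      exact add_left_cancel this
    have hW2 : W2 = W2' := by
      have := key.1
      rw [hW1, hW3] at this
      exact add_left_cancel (add_right_cancel this)
    simp [hW1, hW2, hW3]
  · -- pair {2,3}
    apply aux_card_3L L T2 T3 (fun W => (ψ2 W.2.1 W.2.2, ψ3 W.1 W.2.2))
    rintro ⟨W1, W2, W3⟩ ⟨W1', W2', W3'⟩ h
    simp only [Prod.mk.injEq] at h
    obtain ⟨ha, hb⟩ := h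
    have key : φ23 (ψ2 W2 W3) (ψ3 W1 W3) = φ23 (ψ2 W2' W3') (ψ3 W1' W3') := by
      rw [ha, hb]
    rw [h23, h23, Prod.mk.injEq] at key
    have hW1 : W1 = W1' := aux_w1 key.1 key.2
    have key2 : φ13 (ψ1 W1 0) (ψ3 W1 W3) = φ13 (ψ1 W1' 0) (ψ3 W1' W3') := by
      rw [hb, hW1]
    rw [h13, h13, Prod.mk.injEq] at key2
    have hW3 : W3 = W3' := by
      have := key2.1
      rw [hW1] at this
      exact add_left_cancel this
    have hW2 : W2 = W2' := by
      have := key.1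
      rw [hW1, hW3] at this
      exact add_left_cancel (add_right_cancel this)
    simp [hW1, hW2, hW3]
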